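/- With p, p_t, P_d as above and q(t) := ∫_{∂B_1} |∇_τ p|² dσ + 4∫_{∂B_1}(p − P_d)² dσ − (1/(2d))∫_{∂B_1} |∇_τ p|²/p_t dσ defined for t in an open interval where p_t > 0 on ∂B_1, the second derivative satisfies q''(t) = −(1/d) ∫_{∂B_1} (|∇_τ p|²/p_t³)(p − P_d)² dσ ≤ 0; in particular q is concave on that interval. -/

import Mathlib

open MeasureTheory Metric
open scoped RealInnerProductSpace NNReal ENNReal


lemma lip_normalize {E : Type*} [NormedAddCommGroup E] [NormedSpace ℝ E] :
    LipschitzOnWith 2 (fun x : E => ‖x‖⁻¹ • x) {x | 1 ≤ ‖x‖} := by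
  rw [lipschitzOnWith_iff_dist_le_mul]
  intro x hx y hy
  simp only [Set.mem_setOf_eq] at hx hy
  have hx0 : (0:ℝ) < ‖x‖ := lt_of_lt_of_le one_pos hx
  have hy0 : (0:ℝ) < ‖y‖ := lt_of_lt_of_le one_pos hy
  have key : ‖x‖⁻¹ • x - ‖y‖⁻¹ • y = ‖x‖⁻¹ • (x - y) + (‖x‖⁻¹ - ‖y‖⁻¹) • y := by
    rw [smul_sub, sub_smul]; abel
  rw [dist_eq_norm, key]
  have h1 : ‖‖x‖⁻¹ • (x - y)‖ ≤ ‖x - y‖ := by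
    rw [norm_smul, norm_inv, norm_norm]
    calc ‖x‖⁻¹ * ‖x - y‖ ≤ 1 * ‖x - y‖ := by
          apply mul_le_mul_of_nonneg_right _ (norm_nonneg _)
          rw [inv_le_one_iff₀]; right; exact hx
      _ = ‖x - y‖ := one_mul _
  have h2 : ‖(‖x‖⁻¹ - ‖y‖⁻¹) • y‖ ≤ ‖x - y‖ := by
    rw [norm_smul, Real.norm_eq_abs]
    have : |‖x‖⁻¹ - ‖y‖⁻¹| = |‖y‖ - ‖x‖| / (‖x‖ * ‖y‖) := by
      rw [inv_sub_inv (ne_of_gt hx0) (ne_of_gt hy0), abs_div,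
        abs_of_pos (mul_pos hx0 hy0)]
    rw [this]
    have hny : |‖y‖ - ‖x‖| ≤ ‖x - y‖ := by
      rw [abs_sub_comm]; exact abs_norm_sub_norm_le x y
    calc |‖y‖ - ‖x‖| / (‖x‖ * ‖y‖) * ‖y‖ = |‖y‖ - ‖x‖| / ‖x‖ := by
          field_simp
      _ ≤ ‖x - y‖ / 1 := by
          apply div_le_div₀ (norm_nonneg _) hny one_pos hx
      _ = ‖x - y‖ := div_one _
  calc ‖‖x‖⁻¹ • (x - y) + (‖x‖⁻¹ - ‖y‖⁻¹) • y‖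
      ≤ ‖‖x‖⁻¹ • (x - y)‖ + ‖(‖x‖⁻¹ - ‖y‖⁻¹) • y‖ := norm_add_le _ _
    _ ≤ ‖x - y‖ + ‖x - y‖ := add_le_add h1 h2
    _ = 2 * dist x y := by rw [dist_eq_norm]; ring

lemma coord_le_norm {n : ℕ} (x : EuclideanSpace ℝ (Fin n)) (i : Fin n) : |x i| ≤ ‖x‖ := by
  rw [EuclideanSpace.norm_eq]
  calc |x i| = Real.sqrt (‖x i‖ ^ 2) := by
        rw [Real.sqrt_sq_eq_abs, Real.norm_eq_abs, abs_abs]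
    _ ≤ _ := Real.sqrt_le_sqrt
        (Finset.single_le_sum (f := fun j => ‖x j‖ ^ 2) (fun j _ => sq_nonneg _)
          (Finset.mem_univ i))

lemma lip_insert (m : ℕ) (i : Fin (m+1)) (e : ℝ) :
    ∃ K : ℝ≥0, LipschitzWith K (fun y : Fin m → ℝ =>
      ((WithLp.equiv 2 (∀ _ : Fin (m+1), ℝ)).symm (Fin.insertNth i e y) :
        EuclideanSpace ℝ (Fin (m+1)))) := by
  have h1 : LipschitzWith 1 (fun y : Fin m → ℝ => (Fin.insertNth i e y : Fin (m+1) → ℝ)) := by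
    apply LipschitzWith.of_dist_le_mul
    intro y z
    rw [NNReal.coe_one, one_mul]
    rw [dist_pi_le_iff dist_nonneg]
    intro k
    rcases eq_or_ne k i with rfl | hk
    · simp [dist_nonneg]
    · rcases Fin.exists_succAbove_eq hk with ⟨j, rfl⟩
      simp only [Fin.insertNth_apply_succAbove]
      exact dist_le_pi_dist y z j
  have h2 : LipschitzWith ((Fintype.card (Fin (m+1)) : ℝ≥0) ^ (1 / (2:ℝ≥0∞)).toReal)
      (WithLp.equiv 2 (∀ _ : Fin (m+1), ℝ)).symm :=
    (PiLp.antilipschitzWith_ofLp 2 _).to_rightInverse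
      (Equiv.rightInverse_symm _)
  exact ⟨_, h2.comp h1⟩
lemma sphere_haus_fin (m : ℕ) :
    μH[(m:ℝ)] (sphere (0 : EuclideanSpace ℝ (Fin (m+1))) 1) < ⊤ := by
  set E := EuclideanSpace ℝ (Fin (m+1))
  set r : E → E := fun x => ‖x‖⁻¹ • x with hr
  set S : Set E := {x | 1 ≤ ‖x‖} with hS
  set B : Set (Fin m → ℝ) := closedBall 0 1 with hB
  set G : Fin (m+1) → ℝ → (Fin m → ℝ) → E := fun i e y =>
    ((WithLp.equiv 2 (∀ _ : Fin (m+1), ℝ)).symm (Fin.insertNth i e y)) with hG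
  have hGS : ∀ i e, |e| = 1 → ∀ y, G i e y ∈ S := by
    intro i e he y
    have h1 : |G i e y i| ≤ ‖G i e y‖ := coord_le_norm _ i
    have h2 : G i e y i = e := by
      show (Fin.insertNth i e y : Fin (m+1) → ℝ) i = e
      simp
    rw [h2, he] at h1
    exact h1
  -- the cover
  have hcov : sphere (0 : E) 1 ⊆
      ⋃ p : Fin (m+1) × Bool, r '' (G p.1 (cond p.2 1 (-1)) '' B) := by
    intro x hx
    have hxn : ‖x‖ = 1 := by rwa [mem_sphere_zero_iff_norm] at hx
    obtain ⟨i, -, hi⟩ := Finset.exists_max_image Finset.univ (fun k => |x k|)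
      ⟨0, Finset.mem_univ 0⟩
    have hi' : ∀ k, |x k| ≤ |x i| := fun k => hi k (Finset.mem_univ k)
    have hxi : 0 < |x i| := by
      rcases lt_or_eq_of_le (abs_nonneg (x i)) with h | h
      · exact h
      · exfalso
        have : x = 0 := by
          ext k
          have := hi' k
          rw [← h] at this
          simpa using le_antisymm this (abs_nonneg _)
        rw [this] at hxn; simp at hxn
    set y : Fin m → ℝ := fun j => x (i.succAbove j) / |x i| with hy
    have hyB : y ∈ B := by
      rw [hB, mem_closedBall, dist_pi_le_iff zero_le_one]
      intro j
      simp only [Real.dist_eq, Pi.zero_apply, sub_zero, hy]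
      rw [abs_div, abs_abs, div_le_one hxi]
      exact hi' _
    set e : ℝ := if 0 ≤ x i then 1 else -1 with he
    have hb : ∃ b : Bool, cond b 1 (-1 : ℝ) = e := by
      rcases le_or_gt 0 (x i) with h | h
      · exact ⟨true, by simp [he, h]⟩
      · exact ⟨false, by simp [he, not_le.2 h]⟩
    obtain ⟨bb, hbb⟩ := hb
    refine Set.mem_iUnion.2 ⟨⟨i, bb⟩, ?_⟩
    refine ⟨G i (cond bb 1 (-1)) y, ⟨y, hyB, rfl⟩, ?_⟩
    have hGy : G i (cond bb 1 (-1)) y = (|x i|)⁻¹ • x := by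
      rw [hbb]
      show (WithLp.equiv 2 (∀ _ : Fin (m+1), ℝ)).symm (Fin.insertNth i e y) = _
      ext k
      change (Fin.insertNth i e y : Fin (m+1) → ℝ) k = |x i|⁻¹ * x k
      rcases eq_or_ne k i with rfl | hk
      · have hne : x k ≠ 0 := by
          intro h0
          rw [h0] at hxi
          simp at hxi
        simp only [Fin.insertNth_apply_same]
        rw [he]
        rcases le_or_gt 0 (x k) with h | h
        · rw [if_pos h, abs_of_nonneg h, inv_mul_eq_div, div_self hne]
        · rw [if_neg (not_le.2 h), abs_of_neg h]
          rw [inv_neg, neg_mul, inv_mul_eq_div, div_self hne]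
      · rcases Fin.exists_succAbove_eq hk with ⟨j, rfl⟩
        simp only [Fin.insertNth_apply_succAbove, hy]
        rw [div_eq_inv_mul]
    rw [hGy]
    show ‖(|x i|)⁻¹ • x‖⁻¹ • ((|x i|)⁻¹ • x) = x
    rw [norm_smul, hxn, mul_one, norm_inv, Real.norm_eq_abs, abs_abs, inv_inv,
      smul_smul, mul_inv_cancel₀ (ne_of_gt hxi), one_smul]
  -- measure bound
  refine lt_of_le_of_lt (le_trans (measure_mono hcov) (measure_iUnion_le _)) ?_
  rw [tsum_fintype]
  refine ENNReal.sum_lt_top.2 (fun p _ => ?_)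
  obtain ⟨K, hK⟩ := lip_insert m p.1 (cond p.2 1 (-1))
  have him : G p.1 (cond p.2 1 (-1)) '' B ⊆ S := by
    rintro _ ⟨y, -, rfl⟩
    exact hGS _ _ (by rcases p.2 with _ | _ <;> norm_num) y
  have hm0 : (0:ℝ) ≤ (m:ℝ) := Nat.cast_nonneg m
  have step1 : μH[(m:ℝ)] (r '' (G p.1 (cond p.2 1 (-1)) '' B)) ≤
      (2 : ℝ≥0∞) ^ (m:ℝ) * μH[(m:ℝ)] (G p.1 (cond p.2 1 (-1)) '' B) := by
    have := (lip_normalize (E := E)).mono him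
    simpa using this.hausdorffMeasure_image_le hm0
  have step2 : μH[(m:ℝ)] (G p.1 (cond p.2 1 (-1)) '' B) ≤
      (K : ℝ≥0∞) ^ (m:ℝ) * μH[(m:ℝ)] B :=
    hK.hausdorffMeasure_image_le hm0 B
  have step3 : μH[(m:ℝ)] B < ⊤ := by
    have hcard : ((m:ℝ)) = ((Fintype.card (Fin m) : ℕ) : ℝ) := by simp
    rw [hB, hcard, hausdorffMeasure_pi_real]
    exact measure_closedBall_lt_top
  calc μH[(m:ℝ)] (r '' (G p.1 (cond p.2 1 (-1)) '' B))
      ≤ (2 : ℝ≥0∞) ^ (m:ℝ) * ((K : ℝ≥0∞) ^ (m:ℝ) * μH[(m:ℝ)] B) :=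
        le_trans step1 (mul_le_mul_right step2 _)
    _ < ⊤ := by
        apply ENNReal.mul_lt_top
        · exact ENNReal.rpow_lt_top_of_nonneg hm0 (by norm_num)
        · exact ENNReal.mul_lt_top
            (ENNReal.rpow_lt_top_of_nonneg hm0 ENNReal.coe_ne_top) step3

lemma wrapper {α : Type*} [MeasurableSpace α] (μ : Measure α) [IsFiniteMeasure μ]
    (F F' : ℝ → α → ℝ) (s₀ ε C : ℝ) (hε : 0 < ε)
    (hFm : ∀ s, AEStronglyMeasurable (F s) μ)
    (hF'm : AEStronglyMeasurable (F' s₀) μ)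
    (h : ∀ᵐ x ∂μ, ‖F s₀ x‖ ≤ C ∧ ∀ s ∈ Metric.ball s₀ ε, ‖F' s x‖ ≤ C ∧
      HasDerivAt (fun r => F r x) (F' s x) s) :
    HasDerivAt (fun s => ∫ x, F s x ∂μ) (∫ x, F' s₀ x ∂μ) s₀ := by
  have hint : Integrable (F s₀) μ :=
    Integrable.mono' (integrable_const C) (hFm s₀) (h.mono fun x hx => hx.1)
  exact (hasDerivAt_integral_of_dominated_loc_of_deriv_le (Metric.ball_mem_nhds s₀ hε)
    (Filter.Eventually.of_forall hFm) hint hF'm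
    (h.mono fun x hx s hs => (hx.2 s hs).1) (integrable_const C)
    (h.mono fun x hx s hs => (hx.2 s hs).2)).2

lemma hasDerivAt_int_pow {α : Type*} [MeasurableSpace α] (μ : Measure α) [IsFiniteMeasure μ]
    (N u : α → ℝ) (hN : Measurable N) (hu : Measurable u)
    (c : ℝ) (k : ℕ) (CN Cu δ ε s₀ : ℝ) (hδ : 0 < δ) (hε : 0 < ε)
    (hbd : ∀ᵐ x ∂μ, |N x| ≤ CN ∧ |u x| ≤ Cu ∧ ∀ s ∈ Metric.ball s₀ ε, δ ≤ c + s * u x) :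
    HasDerivAt (fun s => ∫ x, N x / (c + s * u x) ^ (k+1) ∂μ)
      (∫ x, (-((k:ℝ)+1)) * (N x * u x) / (c + s₀ * u x) ^ (k+2) ∂μ) s₀ := by
  set F : ℝ → α → ℝ := fun s x => N x / (c + s * u x) ^ (k+1) with hF
  set F' : ℝ → α → ℝ := fun s x => (-((k:ℝ)+1)) * (N x * u x) / (c + s * u x) ^ (k+2) with hF'
  have hden_m : ∀ s : ℝ, Measurable (fun x => (c + s * u x) ^ (k+1)) :=
    fun s => ((hu.const_mul s).const_add c).pow_const (k+1)
  have hden_m2 : ∀ s : ℝ, Measurable (fun x => (c + s * u x) ^ (k+2)) :=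
    fun s => ((hu.const_mul s).const_add c).pow_const (k+2)
  apply wrapper μ F F' s₀ ε (CN / δ ^ (k+1) + ((k:ℝ)+1) * (CN * Cu) / δ ^ (k+2)) hε
  · exact fun s => (hN.div (hden_m s)).aestronglyMeasurable
  · exact (((hN.mul hu).const_mul _).div (hden_m2 s₀)).aestronglyMeasurable
  · refine hbd.mono fun x hx => ?_
    obtain ⟨hxN, hxu, hxδ⟩ := hx
    have hCN : 0 ≤ CN := le_trans (abs_nonneg _) hxN
    have hCu : 0 ≤ Cu := le_trans (abs_nonneg _) hxu
    have hA : ∀ s ∈ Metric.ball s₀ ε, 0 < c + s * u x :=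
      fun s hs => lt_of_lt_of_le hδ (hxδ s hs)
    constructor
    · -- bound on F s₀
      have hs₀ : s₀ ∈ Metric.ball s₀ ε := mem_ball_self hε
      have h1 : ‖F s₀ x‖ ≤ CN / δ ^ (k+1) := by
        rw [hF, Real.norm_eq_abs, abs_div, abs_of_pos (pow_pos (hA s₀ hs₀) _)]
        apply div_le_div₀ hCN hxN (pow_pos hδ _)
        exact pow_le_pow_left₀ hδ.le (hxδ s₀ hs₀) _
      refine h1.trans (le_add_of_nonneg_right (by positivity))
    · intro s hs
      constructor
      · -- bound on F' s
        have h1 : ‖F' s x‖ ≤ ((k:ℝ)+1) * (CN * Cu) / δ ^ (k+2) := by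
          rw [hF', Real.norm_eq_abs, abs_div, abs_of_pos (pow_pos (hA s hs) _),
            abs_mul, abs_mul, abs_neg, abs_of_nonneg (by positivity : (0:ℝ) ≤ (k:ℝ)+1)]
          apply div_le_div₀ (by positivity) _ (pow_pos hδ _)
            (pow_le_pow_left₀ hδ.le (hxδ s hs) _)
          exact mul_le_mul_of_nonneg_left (mul_le_mul hxN hxu (abs_nonneg _) hCN)
            (by positivity)
        refine h1.trans (le_add_of_nonneg_left (by positivity))
      · -- derivative
        have hne : c + s * u x ≠ 0 := ne_of_gt (hA s hs)
        have hden : HasDerivAt (fun r : ℝ => c + r * u x) (u x) s := by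
          simpa using ((hasDerivAt_id s).mul_const (u x)).const_add c
        have hpow := hden.pow (k+1)
        have h := (hasDerivAt_const s (N x)).div hpow (pow_ne_zero _ hne)
        refine h.congr_deriv (Eq.symm ?_)
        simp only [hF', Pi.pow_apply, Nat.add_sub_cancel]
        rw [div_eq_div_iff (pow_ne_zero _ hne) (pow_ne_zero _ (pow_ne_zero _ hne))]
        push_cast
        ring

theorem stmt9 (d : ℕ) (hd : 1 ≤ d) (A : Matrix (Fin d) (Fin d) ℝ)
    (hsymm : A.IsSymm) (hpsd : A.PosSemidef) (htr : A.trace = 1)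
    (p Pd : EuclideanSpace ℝ (Fin d) → ℝ)
    (hp : ∀ x, p x = (1 / 2) * ∑ i : Fin d, ∑ j : Fin d, A i j * x i * x j)
    (hPd : ∀ x, Pd x = ‖x‖ ^ 2 / (2 * d))
    (pt : ℝ → EuclideanSpace ℝ (Fin d) → ℝ)
    (hpt : ∀ s x, pt s x = s * p x + (1 - s) * Pd x)
    (gt : EuclideanSpace ℝ (Fin d) → EuclideanSpace ℝ (Fin d))
    (hgt : ∀ x, gt x = gradient p x - ⟪gradient p x, x⟫ • x)
    (a b : ℝ) (hab : a < b)
    (hpos : ∀ s ∈ Set.Ioo a b, ∀ x ∈ sphere (0 : EuclideanSpace ℝ (Fin d)) 1, 0 < pt s x)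
    (q : ℝ → ℝ)
    (hq : ∀ s, q s =
      (∫ x in sphere (0 : EuclideanSpace ℝ (Fin d)) 1, ‖gt x‖ ^ 2 ∂(μH[(d : ℝ) - 1])) +
        4 * (∫ x in sphere (0 : EuclideanSpace ℝ (Fin d)) 1,
              (p x - Pd x) ^ 2 ∂(μH[(d : ℝ) - 1])) -
        (1 / (2 * d)) * ∫ x in sphere (0 : EuclideanSpace ℝ (Fin d)) 1,
              ‖gt x‖ ^ 2 / pt s x ∂(μH[(d : ℝ) - 1]))
    (t : ℝ) (ht : t ∈ Set.Ioo a b) :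
    deriv (deriv q) t =
      -(1 / d) * ∫ x in sphere (0 : EuclideanSpace ℝ (Fin d)) 1,
          (‖gt x‖ ^ 2 / (pt t x) ^ 3) * (p x - Pd x) ^ 2 ∂(μH[(d : ℝ) - 1]) ∧
    deriv (deriv q) t ≤ 0 := by
  obtain ⟨m, rfl⟩ : ∃ m, d = m + 1 := ⟨d - 1, (Nat.succ_pred_eq_of_pos hd).symm⟩
  clear hd hsymm hpsd htr
  have hEdef : True := trivial
  set μ : Measure (EuclideanSpace ℝ (Fin (m+1))) := (μH[((m+1:ℕ):ℝ) - 1]).restrict (sphere 0 1) with hμdef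
  haveI hfin : IsFiniteMeasure μ := by
    constructor
    rw [hμdef, Measure.restrict_apply_univ]
    have hexp : ((m+1:ℕ):ℝ) - 1 = (m:ℝ) := by push_cast; ring
    rw [hexp]
    exact sphere_haus_fin m
  -- basic real constants
  set D : ℝ := ((m+1:ℕ):ℝ) with hD
  have hD0 : 0 < D := by rw [hD]; positivity
  set cD : ℝ := 1 / (2 * D) with hcD
  have hcD0 : 0 < cD := by rw [hcD]; positivity
  -- abbreviations
  set g : EuclideanSpace ℝ (Fin (m+1)) → ℝ := fun x => ‖gt x‖ ^ 2 with hg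
  set u : EuclideanSpace ℝ (Fin (m+1)) → ℝ := fun x => p x - Pd x with hu
  -- continuity
  have hproj : ∀ i : Fin (m+1), ContDiff ℝ 1 (fun x : EuclideanSpace ℝ (Fin (m+1)) => x i) := by
    intro i
    exact ((ContinuousLinearMap.proj i : (∀ _ : Fin (m+1), ℝ) →L[ℝ] ℝ).contDiff).comp
      (PiLp.continuousLinearEquiv 2 ℝ (fun _ : Fin (m+1) => ℝ)).contDiff
  have hpc : ContDiff ℝ 1 p := by
    rw [show p = fun x => (1 / 2) * ∑ i : Fin (m+1), ∑ j : Fin (m+1), A i j * x i * x j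
      from funext hp]
    refine contDiff_const.mul ?_
    refine ContDiff.sum fun i _ => ?_
    refine ContDiff.sum fun j _ => ?_
    exact (contDiff_const.mul (hproj i)).mul (hproj j)
  have hpcont : Continuous p := hpc.continuous
  have hPdc : Continuous Pd := by
    rw [show Pd = fun x : EuclideanSpace ℝ (Fin (m+1)) => ‖x‖ ^ 2 / (2 * ((m+1:ℕ):ℝ)) from funext hPd]
    exact (continuous_norm.pow 2).div_const _
  have huc : Continuous u := by rw [hu]; exact hpcont.sub hPdc
  have hgradc : Continuous (gradient p) := by
    show Continuous fun x => (InnerProductSpace.toDual ℝ (EuclideanSpace ℝ (Fin (m+1)))).symm (fderiv ℝ p x)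
    exact (InnerProductSpace.toDual ℝ (EuclideanSpace ℝ (Fin (m+1)))).symm.continuous.comp
      (hpc.continuous_fderiv one_ne_zero)
  have hgtc : Continuous gt := by
    rw [show gt = fun x => gradient p x - ⟪gradient p x, x⟫ • x from funext hgt]
    exact hgradc.sub ((hgradc.inner continuous_id : Continuous fun x => ⟪gradient p x, x⟫).smul continuous_id)
  have hgc : Continuous g := by rw [hg]; exact (hgtc.norm.pow 2)
  -- key identity on the sphere
  have hkey : ∀ s : ℝ, ∀ x ∈ sphere (0:EuclideanSpace ℝ (Fin (m+1))) 1, pt s x = cD + s * u x := by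
    intro s x hx
    rw [mem_sphere_zero_iff_norm] at hx
    have hPdx : Pd x = cD := by
      rw [hPd, hx, hcD, hD]
      norm_num
    rw [hpt]
    simp only [hu]
    rw [hPdx]
    ring
  -- uniform bounds on the sphere
  obtain ⟨Cg, hCg⟩ := (isCompact_sphere (0:EuclideanSpace ℝ (Fin (m+1))) 1).exists_bound_of_continuousOn
    hgc.continuousOn
  obtain ⟨Cu, hCu⟩ := (isCompact_sphere (0:EuclideanSpace ℝ (Fin (m+1))) 1).exists_bound_of_continuousOn
    huc.continuousOn
  -- sphere is nonempty
  have hSne : (sphere (0:EuclideanSpace ℝ (Fin (m+1))) 1).Nonempty := by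
    refine ⟨EuclideanSpace.single 0 (1:ℝ), ?_⟩
    rw [mem_sphere_zero_iff_norm, EuclideanSpace.norm_single]
    norm_num
  -- local lower bounds on the denominator
  have hbounds : ∀ s₀ ∈ Set.Ioo a b, ∃ ε > 0, ∃ δ > 0,
      ∀ x ∈ sphere (0:EuclideanSpace ℝ (Fin (m+1))) 1, ∀ s ∈ Metric.ball s₀ ε, δ ≤ cD + s * u x := by
    intro s₀ hs₀
    obtain ⟨hs₀a, hs₀b⟩ := hs₀
    set ε := min (s₀ - a) (b - s₀) / 2 with hε
    have hεpos : 0 < ε := by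
      rw [hε]
      exact div_pos (lt_min (by linarith) (by linarith)) two_pos
    refine ⟨ε, hεpos, ?_⟩
    have hε1 : ε ≤ (s₀ - a) / 2 := by
      have := min_le_left (s₀ - a) (b - s₀); rw [hε]; linarith
    have hε2 : ε ≤ (b - s₀) / 2 := by
      have := min_le_right (s₀ - a) (b - s₀); rw [hε]; linarith
    have hm1 : s₀ - ε ∈ Set.Ioo a b := ⟨by linarith, by linarith⟩
    have hm2 : s₀ + ε ∈ Set.Ioo a b := ⟨by linarith, by linarith⟩
    set f : EuclideanSpace ℝ (Fin (m+1)) → ℝ := fun x => min (cD + (s₀ - ε) * u x) (cD + (s₀ + ε) * u x) with hf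
    have hfc : Continuous f := by
      rw [hf]
      exact (continuous_const.add (continuous_const.mul huc)).min
        (continuous_const.add (continuous_const.mul huc))
    obtain ⟨x₀, hx₀S, hx₀min⟩ := (isCompact_sphere (0:EuclideanSpace ℝ (Fin (m+1))) 1).exists_isMinOn hSne
      hfc.continuousOn
    refine ⟨f x₀, ?_, ?_⟩
    · rw [hf]
      apply lt_min
      · rw [← hkey _ _ hx₀S]; exact hpos _ hm1 _ hx₀S
      · rw [← hkey _ _ hx₀S]; exact hpos _ hm2 _ hx₀S
    · intro x hx s hs
      have h1 : f x₀ ≤ f x := (isMinOn_iff.mp hx₀min) x hx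
      rw [mem_ball, Real.dist_eq] at hs
      have habs := abs_lt.mp hs
      have hmin1 : f x ≤ cD + (s₀ - ε) * u x := by rw [hf]; exact min_le_left _ _
      have hmin2 : f x ≤ cD + (s₀ + ε) * u x := by rw [hf]; exact min_le_right _ _
      rcases le_total 0 (u x) with hux | hux
      · nlinarith
      · nlinarith
  -- measurability
  have hmg : Measurable g := hgc.measurable
  have hmu : Measurable u := huc.measurable
  -- first derivative of the inner integral
  have hDer1 : ∀ s₀ ∈ Set.Ioo a b,
      HasDerivAt (fun s => ∫ x, g x / (cD + s * u x) ∂μ)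
        (∫ x, -(g x * u x) / (cD + s₀ * u x) ^ 2 ∂μ) s₀ := by
    intro s₀ hs₀
    obtain ⟨ε, hε, δ, hδ, hb⟩ := hbounds s₀ hs₀
    have hae1 : ∀ᵐ x ∂μ, |g x| ≤ Cg ∧ |u x| ≤ Cu ∧
        ∀ s ∈ Metric.ball s₀ ε, δ ≤ cD + s * u x := by
      refine ae_restrict_of_forall_mem isClosed_sphere.measurableSet fun x hx => ⟨?_, ?_, hb x hx⟩
      · rw [← Real.norm_eq_abs]; exact hCg x hx
      · rw [← Real.norm_eq_abs]; exact hCu x hx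
    have h := hasDerivAt_int_pow μ g u hmg hmu cD 0 Cg Cu δ ε s₀ hδ hε hae1
    have hfun : (fun s => ∫ x, g x / (cD + s * u x) ^ (0+1) ∂μ)
        = fun s => ∫ x, g x / (cD + s * u x) ∂μ := by
      funext s; simp only [zero_add, pow_one]
    rw [hfun] at h
    convert h using 1
    refine integral_congr_ae (Filter.Eventually.of_forall fun x => ?_)
    push_cast
    ring
  -- second derivative of the inner integral
  have hDer2 : ∀ s₀ ∈ Set.Ioo a b,
      HasDerivAt (fun s => ∫ x, -(g x * u x) / (cD + s * u x) ^ 2 ∂μ)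
        (∫ x, 2 * g x * u x ^ 2 / (cD + s₀ * u x) ^ 3 ∂μ) s₀ := by
    intro s₀ hs₀
    obtain ⟨ε, hε, δ, hδ, hb⟩ := hbounds s₀ hs₀
    have hae2 : ∀ᵐ x ∂μ, |(-(g x * u x))| ≤ Cg * Cu ∧ |u x| ≤ Cu ∧
        ∀ s ∈ Metric.ball s₀ ε, δ ≤ cD + s * u x := by
      refine ae_restrict_of_forall_mem isClosed_sphere.measurableSet fun x hx => ⟨?_, ?_, hb x hx⟩
      · rw [abs_neg, abs_mul]
        have h1 : |g x| ≤ Cg := by rw [← Real.norm_eq_abs]; exact hCg x hx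
        have h2 : |u x| ≤ Cu := by rw [← Real.norm_eq_abs]; exact hCu x hx
        exact mul_le_mul h1 h2 (abs_nonneg _) (le_trans (abs_nonneg _) h1)
      · rw [← Real.norm_eq_abs]; exact hCu x hx
    have h := hasDerivAt_int_pow μ (fun x => -(g x * u x)) u
      ((hmg.mul hmu).neg) hmu cD 1 (Cg * Cu) Cu δ ε s₀ hδ hε hae2
    have hfun : (fun s => ∫ x, -(g x * u x) / (cD + s * u x) ^ (1+1) ∂μ)
        = fun s => ∫ x, -(g x * u x) / (cD + s * u x) ^ 2 ∂μ := by
      funext s; norm_num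
    rw [hfun] at h
    convert h using 1
    refine integral_congr_ae (Filter.Eventually.of_forall fun x => ?_)
    push_cast
    ring
  -- rewrite q
  have hqs : ∀ s, q s = ((∫ x, g x ∂μ) + 4 * (∫ x, (p x - Pd x) ^ 2 ∂μ))
      - cD * ∫ x, g x / (cD + s * u x) ∂μ := by
    intro s
    rw [hq s]
    have h1 : (∫ x, ‖gt x‖ ^ 2 / pt s x ∂μ) = ∫ x, g x / (cD + s * u x) ∂μ := by
      refine setIntegral_congr_fun isClosed_sphere.measurableSet fun x hx => ?_
      rw [hkey s x hx]
    rw [h1]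
  have hqd : ∀ s₀ ∈ Set.Ioo a b, HasDerivAt q
      (-(cD * ∫ x, -(g x * u x) / (cD + s₀ * u x) ^ 2 ∂μ)) s₀ := by
    intro s₀ hs₀
    rw [funext hqs]
    exact ((hDer1 s₀ hs₀).const_mul cD).const_sub _
  have hder_eq : deriv q =ᶠ[nhds t]
      fun s => -(cD * ∫ x, -(g x * u x) / (cD + s * u x) ^ 2 ∂μ) := by
    filter_upwards [isOpen_Ioo.mem_nhds ht] with s hs
    exact (hqd s hs).deriv
  have hQ2 : HasDerivAt (deriv q)
      (-(cD * ∫ x, 2 * g x * u x ^ 2 / (cD + t * u x) ^ 3 ∂μ)) t := by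
    have h := ((hDer2 t ht).const_mul cD).neg
    exact h.congr_of_eventuallyEq hder_eq
  have hRHSint : (∫ x, (‖gt x‖ ^ 2 / (pt t x) ^ 3) * (p x - Pd x) ^ 2 ∂μ)
      = ∫ x, g x / (cD + t * u x) ^ 3 * u x ^ 2 ∂μ := by
    refine setIntegral_congr_fun isClosed_sphere.measurableSet fun x hx => ?_
    rw [hkey t x hx]
  have hint2 : (∫ x, 2 * g x * u x ^ 2 / (cD + t * u x) ^ 3 ∂μ)
      = 2 * ∫ x, g x / (cD + t * u x) ^ 3 * u x ^ 2 ∂μ := by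
    rw [← integral_const_mul]
    exact integral_congr_ae (Filter.Eventually.of_forall fun x => by ring)
  have hmain : deriv (deriv q) t
      = -(1/D) * ∫ x, (‖gt x‖ ^ 2 / (pt t x) ^ 3) * (p x - Pd x) ^ 2 ∂μ := by
    rw [hQ2.deriv, hint2, hRHSint]
    rw [hcD]
    have hDne : D ≠ 0 := ne_of_gt hD0
    field_simp
  refine ⟨hmain, ?_⟩
  rw [hmain]
  have hnn : 0 ≤ ∫ x, (‖gt x‖ ^ 2 / (pt t x) ^ 3) * (p x - Pd x) ^ 2 ∂μ := by
    refine setIntegral_nonneg isClosed_sphere.measurableSet fun x hx => ?_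
    have hpt0 : 0 < pt t x := hpos t ht x hx
    have : (0:ℝ) ≤ ‖gt x‖ ^ 2 / (pt t x) ^ 3 :=
      div_nonneg (sq_nonneg _) (pow_nonneg hpt0.le 3)
    exact mul_nonneg this (sq_nonneg _)
  have h1D : (0:ℝ) ≤ 1 / D := by positivity
  nlinarith
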